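/- For 0 < α ≤ π/4 and T_B = 2(sin²α |0⟩⟨0| + |1⟩⟨1| + cos²α |2⟩⟨2|), the operator I ⊗ T_B − J_α is positive semidefinite, where J_α is the Choi matrix of N_α. Moreover tr T_B = 4. -/

import Mathlib

open Matrix Kronecker Complex ComplexOrder

noncomputable section

abbrev M3 : Type := Matrix (Fin 3) (Fin 3) ℂ
abbrev M9 : Type := Matrix (Fin 3 × Fin 3) (Fin 3 × Fin 3) ℂ

/-- |i⟩⟨j| on ℂ³ -/
def ket (i j : Fin 3) : M3 := Matrix.single i j 1

def E (α : ℝ) : M3 := (Real.sin α : ℂ) • ket 0 1 + ket 1 2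
def D (α : ℝ) : M3 := (Real.cos α : ℂ) • ket 2 1 + ket 1 0

def u (α : ℝ) : Fin 3 × Fin 3 → ℂ := fun p =>
  (((if p = (1,0) then Real.sin α else 0) + (if p = (2,1) then 1 else 0)) /
    Real.sqrt (1 + Real.sin α ^ 2) : ℝ)

def v (α : ℝ) : Fin 3 × Fin 3 → ℂ := fun p =>
  (((if p = (1,2) then Real.cos α else 0) + (if p = (0,1) then 1 else 0)) /
    Real.sqrt (1 + Real.cos α ^ 2) : ℝ)

/-- Projection onto span{|u_α⟩, |v_α⟩}, the support of the Choi matrix of N_α. -/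
def Pproj (α : ℝ) : M9 :=
  vecMulVec (u α) (star (u α)) + vecMulVec (v α) (star (v α))

/-- Partial trace over the first (A) factor. -/
def trA (M : M9) : M3 := fun i j => ∑ k, M (k, i) (k, j)

/-- Partial trace over the second (B) factor. -/
def trB (M : M9) : M3 := fun i j => ∑ k, M (i, k) (j, k)

def Jmat (α : ℝ) : M9 :=
  ((1 + Real.sin α ^ 2 : ℝ) : ℂ) • vecMulVec (u α) (star (u α)) +
  ((1 + Real.cos α ^ 2 : ℝ) : ℂ) • vecMulVec (v α) (star (v α))

def TB (α : ℝ) : M3 :=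
  (2 * Real.sin α ^ 2 : ℂ) • ket 0 0 + (2 : ℂ) • ket 1 1 + (2 * Real.cos α ^ 2 : ℂ) • ket 2 2

def Cdiag (α : ℝ) : Fin 3 × Fin 3 → ℂ
  | (0,0) => (Real.sqrt 2 * Real.sin α : ℝ)
  | (1,0) => (Real.sin α : ℝ)
  | (2,0) => (Real.sqrt 2 * Real.sin α : ℝ)
  | (1,1) => (Real.sqrt 2 : ℝ)
  | (0,2) => (Real.sqrt 2 * Real.cos α : ℝ)
  | (1,2) => (Real.cos α : ℝ)
  | (2,2) => (Real.sqrt 2 * Real.cos α : ℝ)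
  | _ => 0

def Cmat (α : ℝ) : M9 := fun p q =>
  if p = q then Cdiag α p
  else if p = (1,0) ∧ q = (2,1) then -1
  else if p = (1,2) ∧ q = (0,1) then -1
  else 0

set_option maxHeartbeats 4000000 in
lemma key (α : ℝ) : (1 : M3) ⊗ₖ TB α - Jmat α = (Cmat α)ᴴ * Cmat α := by
  have hs : Real.sqrt (1 + Real.sin α ^ 2) ^ 2 = 1 + Real.sin α ^ 2 :=
    Real.sq_sqrt (by positivity)
  have hc : Real.sqrt (1 + Real.cos α ^ 2) ^ 2 = 1 + Real.cos α ^ 2 :=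
    Real.sq_sqrt (by positivity)
  have h2 : Real.sqrt 2 ^ 2 = 2 := Real.sq_sqrt (by norm_num)
  ext ⟨i, j⟩ ⟨k, l⟩
  fin_cases i <;> fin_cases j <;> fin_cases k <;> fin_cases l <;>
  · simp [Matrix.mul_apply, Fintype.sum_prod_type, Fin.sum_univ_three, Cmat, Cdiag,
      Jmat, TB, ket, u, v, vecMulVec_apply, Matrix.kroneckerMap_apply,
      Matrix.one_apply, Matrix.single, Prod.ext_iff, Fin.ext_iff,
      -Complex.ofReal_sin, -Complex.ofReal_cos, -Fin.val_eq_zero_iff]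
    try norm_cast
    try field_simp
    try ring_nf
    try simp [hs, hc, h2]
    try ring_nf

theorem simulation_feasible (α : ℝ) (hα : 0 < α) (hα' : α ≤ Real.pi / 4) :
    ((1 : M3) ⊗ₖ TB α - Jmat α).PosSemidef ∧ (TB α).trace = 4 := by
  constructor
  · rw [key]
    exact Matrix.posSemidef_conjTranspose_mul_self _
  · have h := Real.sin_sq_add_cos_sq α
    simp [Matrix.trace, TB, ket, Matrix.diag, Fin.sum_univ_three, Matrix.single,
      -Complex.ofReal_sin, -Complex.ofReal_cos]
    norm_cast
    nlinarith [h]
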